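/- Let s ∈ V⁺ be a tokenization of σ ∈ Σ⁺ obtained by applying a merge sequence M, and let s = s₁ ‖ … ‖ sₙ be any partition of s into nonempty contiguous token subsequences. Then every merge m of M belongs to [M]_{sᵢ} for some i ∈ {1, …, n}. -/

import Mathlib

namespace BPEMerges5

/-- A merge `m = (r, i, j)` records one application of the merge rule `r` (a triple
`(t, t', t∘t')`) to two adjacent tokens that together span the substring of the underlying
string from character position `i` to character position `j` (1-indexed, inclusive). -/
structure Merge (V : Type*) where
  rule : V × V × V
  i : ℕ
  j : ℕ

variable {Sig V : Type*}

/-- One merge step on a list of tokens annotated with the (1-indexed, inclusive) character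
spans they cover: the merge `m` replaces the adjacent annotated tokens
`(m.rule.1, m.i, k)` and `(m.rule.2.1, k+1, m.j)` by `(m.rule.2.2, m.i, m.j)`, where
`m.rule` belongs to the rule list `R`. -/
def MergeStep (R : List (V × V × V)) (m : Merge V)
    (L L' : List (V × ℕ × ℕ)) : Prop :=
  m.rule ∈ R ∧ ∃ (pre post : List (V × ℕ × ℕ)) (k : ℕ),
    L = pre ++ [(m.rule.1, m.i, k), (m.rule.2.1, k + 1, m.j)] ++ post ∧
    L' = pre ++ [(m.rule.2.2, m.i, m.j)] ++ post

/-- Applying a merge sequence: performing its merges in order. -/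
def ApplySeq (R : List (V × V × V)) :
    List (Merge V) → List (V × ℕ × ℕ) → List (V × ℕ × ℕ) → Prop
  | [], L, L' => L = L'
  | m :: M, L, L' => ∃ L₁, MergeStep R m L L₁ ∧ ApplySeq R M L₁ L'

/-- The initial annotated state for the string `σ`: the sequence of single-character tokens
spelling `σ`, the `k`-th (0-indexed) token spanning character position `k+1`. -/
def initState (toTok : Sig → V) (σ : List Sig) : List (V × ℕ × ℕ) :=
  σ.zipIdx.map fun p => (toTok p.1, p.2 + 1, p.2 + 1)

/-- The first character position spanned by a (nonempty) annotated token list. -/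
def spanLo (P : List (V × ℕ × ℕ)) : ℕ := (P.head?.map fun e => e.2.1).getD 0

/-- The last character position spanned by a (nonempty) annotated token list. -/
def spanHi (P : List (V × ℕ × ℕ)) : ℕ := (P.getLast?.map fun e => e.2.2).getD 0

/-- `[M]_{s'}` for a contiguous token subsequence spanning character positions `u` to `v`:
the subsequence of merges `(r, i, j)` of `M` with `u ≤ i < j ≤ v`. -/
def restrict (M : List (Merge V)) (u v : ℕ) : List (Merge V) :=
  M.filter fun m => u ≤ m.i ∧ m.i < m.j ∧ m.j ≤ v


/-- Auxiliary: `Consec a P b` says the annotated tokens in `P` have consecutive spans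
starting at `a`, with the next free position being `b`. -/
def Consec : ℕ → List (V × ℕ × ℕ) → ℕ → Prop
  | a, [], b => b = a
  | a, e :: rest, b => e.2.1 = a ∧ a ≤ e.2.2 ∧ Consec (e.2.2 + 1) rest b

lemma consec_append {A B : List (V × ℕ × ℕ)} {a b : ℕ} :
    Consec a (A ++ B) b ↔ ∃ c, Consec a A c ∧ Consec c B b := by
  induction A generalizing a with
  | nil =>
    simp only [List.nil_append]
    constructor
    · intro h; exact ⟨a, rfl, h⟩
    · rintro ⟨c, rfl, h⟩; exact h
  | cons e A ih =>
    show (e.2.1 = a ∧ a ≤ e.2.2 ∧ Consec (e.2.2 + 1) (A ++ B) b) ↔ _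
    rw [ih]
    constructor
    · rintro ⟨h1, h2, c, h3, h4⟩; exact ⟨c, ⟨h1, h2, h3⟩, h4⟩
    · rintro ⟨c, ⟨h1, h2, h3⟩, h4⟩; exact ⟨h1, h2, c, h3, h4⟩

lemma consec_init (toTok : Sig → V) (σ : List Sig) :
    Consec 1 (initState toTok σ) (σ.length + 1) := by
  suffices h : ∀ n, Consec (n + 1)
      ((σ.zipIdx n).map fun p => (toTok p.1, p.2 + 1, p.2 + 1)) (n + σ.length + 1) by
    simpa [initState] using h 0
  induction σ with
  | nil => intro n; simp only [List.zipIdx_nil, List.map_nil, Consec, List.length_nil]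
  | cons c σ ih =>
    intro n
    refine ⟨rfl, le_refl _, ?_⟩
    have h2 : n + (c :: σ).length + 1 = n + 1 + σ.length + 1 := by
      simp [List.length_cons]; omega
    rw [h2]
    exact ih (n + 1)

lemma consec_le {P : List (V × ℕ × ℕ)} : ∀ {c d}, Consec c P d → c ≤ d := by
  induction P with
  | nil => intro c d h; have : d = c := h; omega
  | cons e P ih =>
    intro c d h
    obtain ⟨h1, h2, h3⟩ := h
    have := ih h3
    omega

lemma consec_mem {P : List (V × ℕ × ℕ)} : ∀ {c d}, Consec c P d →
    ∀ e ∈ P, c ≤ e.2.1 ∧ e.2.2 < d := by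
  induction P with
  | nil => intro c d _ e he; simp at he
  | cons f P ih =>
    intro c d h e he
    obtain ⟨h1, h2, h3⟩ := h
    rcases List.mem_cons.1 he with rfl | he
    · have := consec_le h3; omega
    · have := ih h3 e he; omega

lemma consec_span {P : List (V × ℕ × ℕ)} : ∀ {c d}, P ≠ [] → Consec c P d →
    spanLo P = c ∧ spanHi P + 1 = d := by
  induction P with
  | nil => intro c d h; exact absurd rfl h
  | cons f P ih =>
    intro c d _ h
    obtain ⟨h1, h2, h3⟩ := h
    constructor
    · simp [spanLo, h1]
    · match P, h3 with
      | [], h3 =>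
        have : d = f.2.2 + 1 := h3
        simp only [spanHi, List.getLast?_singleton, Option.map_some, Option.getD_some]
        omega
      | g :: P, h3 =>
        have := (ih (by simp) h3).2
        simpa [spanHi, List.getLast?_cons_cons] using this

lemma merge_step_consec {R : List (V × V × V)} {m : Merge V} {L L' : List (V × ℕ × ℕ)}
    {a b : ℕ} (h : MergeStep R m L L') (hc : Consec a L b) :
    Consec a L' b ∧ m.i < m.j ∧ (m.rule.2.2, m.i, m.j) ∈ L' ∧
      (∀ e ∈ L, ∃ e' ∈ L', e'.2.1 ≤ e.2.1 ∧ e.2.2 ≤ e'.2.2) := by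
  obtain ⟨-, pre, post, k, hL, hL'⟩ := h
  subst hL hL'
  rw [consec_append] at hc
  obtain ⟨d, hmidA, hpost⟩ := hc
  rw [consec_append] at hmidA
  obtain ⟨c, hpre, hmid⟩ := hmidA
  obtain ⟨e1, e2, e3, e4, e5⟩ : m.i = c ∧ c ≤ k ∧ (k + 1 = k + 1) ∧ k + 1 ≤ m.j ∧
      d = m.j + 1 := by
    simpa [Consec] using hmid
  have hij : m.i < m.j := by omega
  refine ⟨?_, hij, by simp, ?_⟩
  · rw [consec_append]
    refine ⟨d, ?_, hpost⟩
    rw [consec_append]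
    exact ⟨c, hpre, by simp [Consec]; omega⟩
  · intro e he
    have he' : e ∈ pre ∨ e = (m.rule.1, m.i, k) ∨ e = (m.rule.2.1, k + 1, m.j) ∨
        e ∈ post := by
      simpa [List.mem_append, List.mem_cons, or_assoc] using he
    rcases he' with (he | rfl | rfl | he)
    · exact ⟨e, by simp [he], le_refl _, le_refl _⟩
    · exact ⟨(m.rule.2.2, m.i, m.j), by simp, by simp; omega⟩
    · exact ⟨(m.rule.2.2, m.i, m.j), by simp, by simp; omega⟩
    · exact ⟨e, by simp [he], le_refl _, le_refl _⟩

lemma apply_cover {R : List (V × V × V)} :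
    ∀ {M : List (Merge V)} {L₁ L : List (V × ℕ × ℕ)} {a b : ℕ},
      ApplySeq R M L₁ L → Consec a L₁ b →
      ∀ e ∈ L₁, ∃ e' ∈ L, e'.2.1 ≤ e.2.1 ∧ e.2.2 ≤ e'.2.2 := by
  intro M
  induction M with
  | nil =>
    intro L₁ L a b h _ e he
    exact ⟨e, h ▸ he, le_refl _, le_refl _⟩
  | cons m M ih =>
    intro L₁ L a b h hc e he
    obtain ⟨L₂, hstep, hrest⟩ := h
    obtain ⟨hc₂, _, _, hcov⟩ := merge_step_consec hstep hc
    obtain ⟨e₂, he₂, h1, h2⟩ := hcov e he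
    obtain ⟨e', he', h3, h4⟩ := ih hrest hc₂ e₂ he₂
    exact ⟨e', he', by omega, by omega⟩

lemma apply_consec {R : List (V × V × V)} :
    ∀ {M : List (Merge V)} {L₁ L : List (V × ℕ × ℕ)} {a b : ℕ},
      ApplySeq R M L₁ L → Consec a L₁ b →
      Consec a L b ∧ (∀ m ∈ M, m.i < m.j ∧ ∃ e ∈ L, e.2.1 ≤ m.i ∧ m.j ≤ e.2.2) := by
  intro M
  induction M with
  | nil =>
    intro L₁ L a b h hc
    rw [show L₁ = L from h] at hc
    exact ⟨hc, by simp⟩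
  | cons m M ih =>
    intro L₁ L a b h hc
    obtain ⟨L₂, hstep, hrest⟩ := h
    obtain ⟨hc₂, hij, hmem, _⟩ := merge_step_consec hstep hc
    obtain ⟨hcL, hmerges⟩ := ih hrest hc₂
    refine ⟨hcL, ?_⟩
    intro m' hm'
    rcases List.mem_cons.1 hm' with rfl | hm'
    · obtain ⟨e', he', h1, h2⟩ := apply_cover hrest hc₂ _ hmem
      exact ⟨hij, e', he', by simpa using h1, by simpa using h2⟩
    · exact hmerges m' hm'

/-- if `s` is a tokenization of `σ` obtained by applying the merge sequence
`M`, and `s` (with its annotations `L`) is partitioned into nonempty contiguous token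
subsequences, then every merge of `M` belongs to `[M]_P` for some part `P`. -/
theorem merge_subsequences_cover
    (dec : V → List Sig)
    -- each token decodes to a nonempty string
    (hdec_ne : ∀ t : V, dec t ≠ [])
    -- `V` contains a single-character token for each character of `Sig`
    (toTok : Sig → V) (htok : ∀ c : Sig, dec (toTok c) = [c])
    -- the merge rules: each rule `(t, t', tMerged)` merges `(t, t')` into `tMerged`,
    -- which decodes to `dec t ++ dec t'`
    (R : List (V × V × V)) (hR : ∀ r ∈ R, dec r.2.2 = dec r.1 ++ dec r.2.1)
    -- `s` is a tokenization of the nonempty string `σ` obtained by applying `M`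
    (σ : List Sig) (hσ : σ ≠ [])
    (M : List (Merge V)) (L : List (V × ℕ × ℕ))
    (happly : ApplySeq R M (initState toTok σ) L)
    (s : List V) (hsL : s = L.map fun e => e.1)
    -- `parts` is a partition of `s` (with its annotations `L`) into nonempty contiguous
    -- token subsequences
    (parts : List (List (V × ℕ × ℕ)))
    (hjoin : parts.flatten = L)
    (hne : ∀ P ∈ parts, P ≠ []) :
    ∀ m ∈ M, ∃ P ∈ parts, m ∈ restrict M (spanLo P) (spanHi P) := by
  intro m hm
  have hcinit := consec_init toTok σ
  obtain ⟨hcL, hmerges⟩ := apply_consec happly hcinit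
  obtain ⟨hij, e, heL, hlo, hhi⟩ := hmerges m hm
  -- find the part containing e
  rw [← hjoin] at heL
  obtain ⟨P, hP, heP⟩ := List.mem_flatten.1 heL
  obtain ⟨A, B, hparts⟩ := List.append_of_mem hP
  have hLflat : A.flatten ++ P ++ B.flatten = L := by
    rw [← hjoin, hparts]; simp
  rw [← hLflat, consec_append] at hcL
  obtain ⟨d, hcLA, _⟩ := hcL
  rw [consec_append] at hcLA
  obtain ⟨c, _, hcP⟩ := hcLA
  obtain ⟨hsLo, hsHi⟩ := consec_span (hne P hP) hcP
  obtain ⟨h1, h2⟩ := consec_mem hcP e heP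
  refine ⟨P, hP, ?_⟩
  simp only [restrict, List.mem_filter]
  exact ⟨hm, by simp; omega⟩

end BPEMerges5
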